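/- Let K_n^m denote a graph obtained from the complete graph K_n by attaching at least one leaf to each of m distinct vertices of K_n. If m ≤ ⌊n/2⌋, then χ_dd(K_n^m) = χ(K_n^m) = n. -/
import Mathlib


open SimpleGraph

/-- A vertex `v` dominates a set `S` if every vertex of `S` is in the closed
neighborhood of `v`. -/
def Dominates {V : Type*} (G : SimpleGraph V) (v : V) (S : Set V) : Prop :=
  ∀ u ∈ S, u = v ∨ G.Adj v u

/-- A proper coloring is a dominator coloring if every vertex dominates some
(nonempty) color class. -/
def IsDominatorColoring {V : Type*} (G : SimpleGraph V) {k : ℕ}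
    (c : G.Coloring (Fin k)) : Prop :=
  ∀ v : V, ∃ i : Fin k, (∃ u, c u = i) ∧ Dominates G v {u | c u = i}

/-- A proper coloring is a dominated coloring if every nonempty color class is
dominated by some vertex (adjacent to all of its members). -/
def IsDominatedColoring {V : Type*} (G : SimpleGraph V) {k : ℕ}
    (c : G.Coloring (Fin k)) : Prop :=
  ∀ i : Fin k, (∃ u, c u = i) → ∃ v : V, ∀ u, c u = i → G.Adj v u

/-- A domination coloring: every vertex dominates a color class and every
color class is dominated by a vertex. -/
def IsDominationColoring {V : Type*} (G : SimpleGraph V) {k : ℕ}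
    (c : G.Coloring (Fin k)) : Prop :=
  IsDominatorColoring G c ∧ IsDominatedColoring G c

/-- The domination chromatic number χ_dd. -/
noncomputable def ddChromaticNumber {V : Type*} (G : SimpleGraph V) : ℕ :=
  sInf {k | ∃ c : G.Coloring (Fin k), IsDominationColoring G c}

/-- The dominator chromatic number χ_d. -/
noncomputable def dChromaticNumber {V : Type*} (G : SimpleGraph V) : ℕ :=
  sInf {k | ∃ c : G.Coloring (Fin k), IsDominatorColoring G c}

/-- The dominated chromatic number χ_dom. -/
noncomputable def domChromaticNumber {V : Type*} (G : SimpleGraph V) : ℕ :=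
  sInf {k | ∃ c : G.Coloring (Fin k), IsDominatedColoring G c}

/-- A dominating set of a graph. -/
def IsDominatingSet {V : Type*} (G : SimpleGraph V) (s : Finset V) : Prop :=
  ∀ v : V, ∃ u ∈ s, u = v ∨ G.Adj u v

/-- The domination number γ. -/
noncomputable def dominationNumber {V : Type*} (G : SimpleGraph V) : ℕ :=
  sInf {k | ∃ s : Finset V, s.card = k ∧ IsDominatingSet G s}

/-- The graph obtained from `K_n` by attaching, for each leaf `l : L`, a pendant
vertex to the clique vertex `f l`. -/
def completeWithLeaves (n : ℕ) {L : Type*} (f : L → Fin n) :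
    SimpleGraph (Fin n ⊕ L) :=
  SimpleGraph.fromRel (fun x y =>
    (∃ i j : Fin n, x = Sum.inl i ∧ y = Sum.inl j) ∨
    (∃ l : L, x = Sum.inl (f l) ∧ y = Sum.inr l))


section CwlAdj
variable {n : ℕ} {L : Type*} {f : L → Fin n}

lemma cwl_adj_inl_inl {i j : Fin n} :
    (completeWithLeaves n f).Adj (Sum.inl i) (Sum.inl j) ↔ i ≠ j := by
  simp [completeWithLeaves, SimpleGraph.fromRel_adj]

lemma cwl_adj_inl_inr {i : Fin n} {l : L} :
    (completeWithLeaves n f).Adj (Sum.inl i) (Sum.inr l) ↔ i = f l := by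
  constructor
  · rintro ⟨-, (⟨i', j', h, h'⟩ | ⟨l', h, h'⟩) | (⟨i', j', h, h'⟩ | ⟨l', h, h'⟩)⟩ <;>
      simp_all
  · rintro rfl
    exact ⟨by simp, Or.inl (Or.inr ⟨l, rfl, rfl⟩)⟩

lemma cwl_not_adj_inr_inr {l l' : L} :
    ¬ (completeWithLeaves n f).Adj (Sum.inr l) (Sum.inr l') := by
  rintro ⟨-, (⟨i', j', h, h'⟩ | ⟨l'', h, h'⟩) | (⟨i', j', h, h'⟩ | ⟨l'', h, h'⟩)⟩ <;> simp_all

end CwlAdj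

theorem stmt19 (n m : ℕ) (hn : 2 ≤ n) {L : Type*} [Fintype L] [DecidableEq L]
    (f : L → Fin n)
    (hm : (Finset.image f Finset.univ).card = m) (hmn : m ≤ n / 2) :
    ddChromaticNumber (completeWithLeaves n f) = n ∧
    (completeWithLeaves n f).chromaticNumber = n := by
  classical
  set G := completeWithLeaves n f with hG
  set S : Finset (Fin n) := Finset.image f Finset.univ with hS
  -- an embedding of S into its complement
  have hcard : Fintype.card ↥S ≤ Fintype.card ↥(Sᶜ : Finset (Fin n)) := by
    rw [Fintype.card_coe, Fintype.card_coe, Finset.card_compl, hm]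
    simp only [Fintype.card_fin]
    omega
  obtain ⟨e⟩ := Function.Embedding.nonempty_of_card_le hcard
  set g : L → Fin n := fun l => (e ⟨f l, Finset.mem_image_of_mem f (Finset.mem_univ l)⟩ : Fin n)
    with hg
  have hgS : ∀ l, g l ∉ S := fun l => Finset.mem_compl.mp (e _).2
  have hgne : ∀ l, g l ≠ f l := fun l h =>
    hgS l (h ▸ Finset.mem_image_of_mem f (Finset.mem_univ l))
  have hginj : ∀ l l', g l = g l' → f l = f l' := by
    intro l l' h
    have := e.injective (Subtype.ext h)
    exact congrArg Subtype.val this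
  -- the coloring
  have hproper : ∀ u v, G.Adj u v → Sum.elim id g u ≠ Sum.elim id g v := by
    rintro (i | l) (j | l') hadj <;> simp only [Sum.elim_inl, Sum.elim_inr, id]
    · exact cwl_adj_inl_inl.mp hadj
    · exact fun h => hgne l' (h.symm.trans (cwl_adj_inl_inr.mp hadj))
    · exact fun h => hgne l (h.trans (cwl_adj_inl_inr.mp hadj.symm))
    · exact absurd hadj cwl_not_adj_inr_inr
  let C : G.Coloring (Fin n) := Coloring.mk (Sum.elim id g) (fun h => hproper _ _ h)
  have hCl : ∀ i, C (Sum.inl i) = i := fun i => rfl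
  have hCr : ∀ l, C (Sum.inr l) = g l := fun l => rfl
  -- membership: n is achievable
  have hmem : n ∈ {k | ∃ c : G.Coloring (Fin k), IsDominationColoring G c} := by
    refine ⟨C, ?_, ?_⟩
    · rintro (i | l)
      · -- find a color not used by any leaf
        have : Finset.image g Finset.univ ⊆ Finset.image (fun s : ↥S => (e s : Fin n))
            Finset.univ := by
          intro x hx
          obtain ⟨l, -, rfl⟩ := Finset.mem_image.mp hx
          exact Finset.mem_image_of_mem _ (Finset.mem_univ _)
        have hlt : (Finset.image g Finset.univ).card < n := by
          calc (Finset.image g Finset.univ).card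
              ≤ (Finset.image (fun s : ↥S => (e s : Fin n)) Finset.univ).card :=
                Finset.card_le_card this
            _ ≤ Fintype.card ↥S := Finset.card_image_le.trans (by simp)
            _ = m := by rw [Fintype.card_coe, hm]
            _ < n := by omega
        obtain ⟨j, hj⟩ : ∃ j : Fin n, j ∉ Finset.image g Finset.univ := by
          by_contra h
          push_neg at h
          have : Finset.univ ⊆ Finset.image g Finset.univ := fun x _ => h x
          have := Finset.card_le_card this
          simp only [Finset.card_univ, Fintype.card_fin] at this
          omega
        refine ⟨j, ⟨Sum.inl j, hCl j⟩, ?_⟩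
        rintro (i' | l') hu
        · simp only [Set.mem_setOf_eq, hCl] at hu
          subst hu
          rcases eq_or_ne i' i with rfl | h
          · exact Or.inl rfl
          · exact Or.inr (cwl_adj_inl_inl.mpr (Ne.symm h))
        · exfalso
          simp only [Set.mem_setOf_eq, hCr] at hu
          exact hj (by rw [← hu]; exact Finset.mem_image_of_mem g (Finset.mem_univ l'))
      · -- leaf l dominates class of f l, which is {inl (f l)}
        refine ⟨f l, ⟨Sum.inl (f l), hCl _⟩, ?_⟩
        rintro (i' | l') hu
        · simp only [Set.mem_setOf_eq, hCl] at hu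
          subst hu
          exact Or.inr (cwl_adj_inl_inr.mpr rfl).symm
        · exfalso
          simp only [Set.mem_setOf_eq, hCr] at hu
          exact hgS l' (by rw [hu]; exact Finset.mem_image_of_mem f (Finset.mem_univ l))
    · rintro i -
      by_cases h : ∃ l0 : L, g l0 = i
      · obtain ⟨l0, hl0⟩ := h
        refine ⟨Sum.inl (f l0), ?_⟩
        rintro (i' | l') hu
        · rw [hCl] at hu; subst hu
          exact cwl_adj_inl_inl.mpr (fun h => hgne l0 (hl0.trans h.symm))
        · rw [hCr] at hu
          exact cwl_adj_inl_inr.mpr (hginj _ _ (hu.trans hl0.symm)).symm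
      · push_neg at h
        have : Nontrivial (Fin n) := Fin.nontrivial_iff_two_le.mpr hn
        obtain ⟨j, hj⟩ := exists_ne i
        refine ⟨Sum.inl j, ?_⟩
        rintro (i' | l') hu
        · rw [hCl] at hu; subst hu
          exact cwl_adj_inl_inl.mpr hj
        · rw [hCr] at hu
          exact absurd hu (h l')
  -- lower bound: any coloring needs at least n colors
  have hlb : ∀ k : ℕ, (∃ c : G.Coloring (Fin k), True) → n ≤ k := by
    rintro k ⟨c, -⟩
    have hinj : Function.Injective (fun i : Fin n => c (Sum.inl i)) := by
      intro i j h
      by_contra hne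
      exact c.valid (cwl_adj_inl_inl.mpr hne) h
    simpa using Fintype.card_le_of_injective _ hinj
  constructor
  · refine le_antisymm (Nat.sInf_le hmem) ?_
    refine le_csInf ⟨n, hmem⟩ ?_
    rintro k ⟨c, -⟩
    exact hlb k ⟨c, trivial⟩
  · refine le_antisymm (Colorable.chromaticNumber_le ⟨C⟩) ?_
    have hclique : G.IsClique (↑(Finset.image Sum.inl Finset.univ : Finset (Fin n ⊕ L))) := by
      intro u hu v hv huv
      simp only [Finset.coe_image, Set.mem_image] at hu hv
      obtain ⟨i, -, rfl⟩ := hu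
      obtain ⟨j, -, rfl⟩ := hv
      exact cwl_adj_inl_inl.mpr (fun h => huv (by rw [h]))
    have := hclique.card_le_chromaticNumber
    rwa [Finset.card_image_of_injective _ Sum.inl_injective, Finset.card_univ,
      Fintype.card_fin] at this
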